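/- Let h ∈ ℝ⁸ and let J(h) be the 5×5 skew-symmetric matrix with J12 = h3, J13 = h4, J14 = h6, J15 = h7, J23 = h5, J24 = h7, J25 = h8, J34 = J35 = J45 = 0. Set Δ = h6h8 - h7², Δ1 = h5h7 - h4h8, Δ2 = h5h6 - h4h7. Then: (i) if Δ² + Δ1² + Δ2² ≠ 0, rank J(h) = 4; (ii) if Δ = Δ1 = Δ2 = 0 but (h3,...,h8) ≠ 0, rank J(h) = 2; (iii) if h3 = h4 = ... = h8 = 0, rank J(h) = 0. -/

import Mathlib

/- Dimensions of coadjoint orbits: rank of the Poisson structure matrix J(h)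
on the dual of the (2,3,5,8) Carnot algebra, in all cases. -/

set_option maxHeartbeats 1000000

noncomputable section

/-- The 5×5 skew-symmetric Poisson structure matrix J(h), where
h = (h1,...,h8) with 0-based indexing (h i = h_{i+1}). -/
noncomputable def J (h : Fin 8 → ℝ) : Matrix (Fin 5) (Fin 5) ℝ :=
  !![0, h 2, h 3, h 5, h 6;
     -(h 2), 0, h 4, h 6, h 7;
     -(h 3), -(h 4), 0, 0, 0;
     -(h 5), -(h 6), 0, 0, 0;
     -(h 6), -(h 7), 0, 0, 0]

/-- Δ = h6h8 - h7². -/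
noncomputable def Δ (h : Fin 8 → ℝ) : ℝ := h 5 * h 7 - (h 6)^2
/-- Δ1 = h5h7 - h4h8. -/
noncomputable def Δ₁ (h : Fin 8 → ℝ) : ℝ := h 4 * h 6 - h 3 * h 7
/-- Δ2 = h5h6 - h4h7. -/
noncomputable def Δ₂ (h : Fin 8 → ℝ) : ℝ := h 4 * h 5 - h 3 * h 6

lemma aux_rank_submatrix_le {k n : ℕ} (A : Matrix (Fin n) (Fin n) ℝ) (f g : Fin k → Fin n) :
    (A.submatrix f g).rank ≤ A.rank := by
  have h1 : A.submatrix f g =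
      ((1 : Matrix (Fin n) (Fin n) ℝ).submatrix f id) *
        (A * ((1 : Matrix (Fin n) (Fin n) ℝ).submatrix id g)) := by
    ext i j
    simp [Matrix.mul_apply, Matrix.one_apply]
  rw [h1]
  exact (Matrix.rank_mul_le_right _ _).trans (Matrix.rank_mul_le_left _ _)

lemma aux_le_rank_of_det {k n : ℕ} (A : Matrix (Fin n) (Fin n) ℝ) (f g : Fin k → Fin n)
    (hd : (A.submatrix f g).det ≠ 0) : k ≤ A.rank := by
  have : (A.submatrix f g).rank = k := by
    rw [Matrix.rank_of_isUnit _ ((Matrix.isUnit_iff_isUnit_det _).mpr hd.isUnit), Fintype.card_fin]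
  calc k = (A.submatrix f g).rank := this.symm
    _ ≤ A.rank := aux_rank_submatrix_le A f g

lemma aux_rank_le_of_ker {n : ℕ} (A : Matrix (Fin n) (Fin n) ℝ) (v : Fin n → ℝ) (hv : v ≠ 0)
    (h : A.mulVec v = 0) : A.rank ≤ n - 1 := by
  have hker : v ∈ LinearMap.ker A.mulVecLin := by
    simpa [Matrix.mulVecLin_apply] using h
  have hpos : 0 < Module.finrank ℝ (LinearMap.ker A.mulVecLin) := by
    rw [Module.finrank_pos_iff]
    exact ⟨⟨⟨v, hker⟩, 0, by simpa using hv⟩⟩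
  have hrn := LinearMap.finrank_range_add_finrank_ker A.mulVecLin
  rw [Module.finrank_fintype_fun_eq_card, Fintype.card_fin] at hrn
  have : A.rank + Module.finrank ℝ (LinearMap.ker A.mulVecLin) = n := hrn
  omega

lemma aux_rank_le_two_of_factor {n : ℕ} (A : Matrix (Fin n) (Fin n) ℝ)
    (B : Matrix (Fin n) (Fin 2) ℝ) (C : Matrix (Fin 2) (Fin n) ℝ) (hf : A = B * C) :
    A.rank ≤ 2 := by
  rw [hf]
  exact (Matrix.rank_mul_le_left _ _).trans (by simpa using B.rank_le_card_width)

lemma aux_two_le_rank {n : ℕ} (A : Matrix (Fin n) (Fin n) ℝ) (i j : Fin n) (t : ℝ) (ht : t ≠ 0)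
    (h1 : A i j = t) (h2 : A j i = -t) (h3 : A i i = 0) (h4 : A j j = 0) : 2 ≤ A.rank := by
  apply aux_le_rank_of_det A ![i, j] ![i, j]
  have : (A.submatrix ![i, j] ![i, j]).det = t * t := by
    rw [Matrix.det_fin_two]
    simp [Matrix.submatrix_apply, h1, h2, h3, h4]
  rw [this]
  exact mul_ne_zero ht ht

theorem rank_J_cases (h : Fin 8 → ℝ) :
    ((Δ h)^2 + (Δ₁ h)^2 + (Δ₂ h)^2 ≠ 0 → (J h).rank = 4) ∧
    (Δ h = 0 → Δ₁ h = 0 → Δ₂ h = 0 →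
      (h 2 ≠ 0 ∨ h 3 ≠ 0 ∨ h 4 ≠ 0 ∨ h 5 ≠ 0 ∨ h 6 ≠ 0 ∨ h 7 ≠ 0) →
      (J h).rank = 2) ∧
    (h 2 = 0 → h 3 = 0 → h 4 = 0 → h 5 = 0 → h 6 = 0 → h 7 = 0 →
      (J h).rank = 0) := by
  refine ⟨?_, ?_, ?_⟩
  · -- case 1: rank 4
    intro hΔ
    have hone : Δ h ≠ 0 ∨ Δ₁ h ≠ 0 ∨ Δ₂ h ≠ 0 := by
      by_contra hc
      push_neg at hc
      obtain ⟨e1, e2, e3⟩ := hc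
      exact hΔ (by rw [e1, e2, e3]; ring)
    -- upper bound: kernel vector
    have hker : (J h).mulVec ![0, 0, Δ h, Δ₁ h, -(Δ₂ h)] = 0 := by
      funext i
      fin_cases i <;>
        simp [Matrix.mulVec, dotProduct, Fin.sum_univ_five, J, Δ, Δ₁, Δ₂] <;> ring
    have hvne : (![0, 0, Δ h, Δ₁ h, -(Δ₂ h)] : Fin 5 → ℝ) ≠ 0 := by
      intro h0
      rcases hone with hx | hx | hx
      · exact hx (by simpa using congrFun h0 2)
      · exact hx (by simpa using congrFun h0 3)
      · exact hx (by simpa using (neg_eq_zero.mp (by simpa using congrFun h0 4)))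
    have hub : (J h).rank ≤ 4 := by
      have := aux_rank_le_of_ker (J h) _ hvne hker
      omega
    -- lower bound: a 4×4 minor
    have hlb : 4 ≤ (J h).rank := by
      rcases hone with hx | hx | hx
      · apply aux_le_rank_of_det (J h) ![0, 1, 3, 4] ![0, 1, 3, 4]
        have hs : (J h).submatrix ![0, 1, 3, 4] ![0, 1, 3, 4] =
            !![0, h 2, h 5, h 6; -(h 2), 0, h 6, h 7; -(h 5), -(h 6), 0, 0;
               -(h 6), -(h 7), 0, 0] := by
          ext i j; fin_cases i <;> fin_cases j <;> simp [J, Matrix.vecHead, Matrix.vecTail]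
        have hd : ((J h).submatrix ![0, 1, 3, 4] ![0, 1, 3, 4]).det = (Δ h)^2 := by
          rw [hs]
          simp [Matrix.det_succ_row_zero, Fin.sum_univ_succ, Fin.succAbove_of_lt_succ,
            Fin.succAbove_of_succ_le, Δ]
          ring
        rw [hd]
        exact pow_ne_zero 2 hx
      · apply aux_le_rank_of_det (J h) ![0, 1, 2, 4] ![0, 1, 2, 4]
        have hs : (J h).submatrix ![0, 1, 2, 4] ![0, 1, 2, 4] =
            !![0, h 2, h 3, h 6; -(h 2), 0, h 4, h 7; -(h 3), -(h 4), 0, 0;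
               -(h 6), -(h 7), 0, 0] := by
          ext i j; fin_cases i <;> fin_cases j <;> simp [J, Matrix.vecHead, Matrix.vecTail]
        have hd : ((J h).submatrix ![0, 1, 2, 4] ![0, 1, 2, 4]).det = (Δ₁ h)^2 := by
          rw [hs]
          simp [Matrix.det_succ_row_zero, Fin.sum_univ_succ, Fin.succAbove_of_lt_succ,
            Fin.succAbove_of_succ_le, Δ₁]
          ring
        rw [hd]
        exact pow_ne_zero 2 hx
      · apply aux_le_rank_of_det (J h) ![0, 1, 2, 3] ![0, 1, 2, 3]
        have hs : (J h).submatrix ![0, 1, 2, 3] ![0, 1, 2, 3] =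
            !![0, h 2, h 3, h 5; -(h 2), 0, h 4, h 6; -(h 3), -(h 4), 0, 0;
               -(h 5), -(h 6), 0, 0] := by
          ext i j; fin_cases i <;> fin_cases j <;> simp [J, Matrix.vecHead, Matrix.vecTail]
        have hd : ((J h).submatrix ![0, 1, 2, 3] ![0, 1, 2, 3]).det = (Δ₂ h)^2 := by
          rw [hs]
          simp [Matrix.det_succ_row_zero, Fin.sum_univ_succ, Fin.succAbove_of_lt_succ,
            Fin.succAbove_of_succ_le, Δ₂]
          ring
        rw [hd]
        exact pow_ne_zero 2 hx
    omega
  · -- case 2: rank 2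
    intro h1 h2 h3 hne
    simp only [Δ, Δ₁, Δ₂, sub_eq_zero] at h1 h2 h3
    by_cases hf : h 7 ≠ 0
    · -- h7 ≠ 0
      have hub : (J h).rank ≤ 2 := by
        apply aux_rank_le_two_of_factor (J h)
          !![h 2, h 6; 0, h 7; -(h 4), 0; -(h 6), 0; -(h 7), 0]
          !![h 6 / h 7, 1, 0, 0, 0; -(h 2) / h 7, 0, h 4 / h 7, h 6 / h 7, 1]
        funext i j
        fin_cases i <;> fin_cases j <;>
simp only [J, Matrix.mul_apply, Fin.sum_univ_two, Matrix.cons_val_zero,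
          Matrix.cons_val_one, Matrix.head_cons, Matrix.empty_val', Matrix.cons_val_fin_one,
          Matrix.head_fin_const, Matrix.cons_val_two, Matrix.tail_cons, Matrix.cons_val_three,
          Matrix.cons_val_four, Matrix.of_apply, Fin.zero_eta, Fin.mk_one, Fin.reduceFinMk, Matrix.cons_val] <;>
          field_simp <;> linarith [h1, h2, h3]
      have hlb : 2 ≤ (J h).rank :=
        aux_two_le_rank (J h) 1 4 (h 7) hf (by simp [J, Matrix.vecHead, Matrix.vecTail]) (by simp [J, Matrix.vecHead, Matrix.vecTail]) (by simp [J, Matrix.vecHead, Matrix.vecTail]) (by simp [J, Matrix.vecHead, Matrix.vecTail])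
      omega
    · push_neg at hf
      have he : h 6 = 0 := by
        have := h1
        rw [hf] at this
        nlinarith [sq_nonneg (h 6)]
      by_cases hd : h 5 ≠ 0
      · -- h5 ≠ 0, h6 = h7 = 0
        have hc : h 4 = 0 := by
          have h3' : h 4 * h 5 = 0 := by rw [he] at h3; simpa using h3
          rcases mul_eq_zero.mp h3' with t | t
          · exact t
          · exact absurd t hd
        have hub : (J h).rank ≤ 2 := by
          apply aux_rank_le_two_of_factor (J h)
            !![0, 1; -(h 2), 0; -(h 3), 0; -(h 5), 0; 0, 0]
            !![1, 0, 0, 0, 0; 0, h 2, h 3, h 5, 0]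
          funext i j
          fin_cases i <;> fin_cases j <;>
simp only [J, Matrix.mul_apply, Fin.sum_univ_two, Matrix.cons_val_zero,
            Matrix.cons_val_one, Matrix.head_cons, Matrix.empty_val', Matrix.cons_val_fin_one,
            Matrix.head_fin_const, Matrix.cons_val_two, Matrix.tail_cons, Matrix.cons_val_three,
            Matrix.cons_val_four, Matrix.of_apply, Fin.zero_eta, Fin.mk_one, Fin.reduceFinMk, Matrix.cons_val] <;>
            norm_num [he, hf, hc]
        have hlb : 2 ≤ (J h).rank :=
          aux_two_le_rank (J h) 0 3 (h 5) hd (by simp [J, Matrix.vecHead, Matrix.vecTail]) (by simp [J, Matrix.vecHead, Matrix.vecTail]) (by simp [J, Matrix.vecHead, Matrix.vecTail])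
            (by simp [J, Matrix.vecHead, Matrix.vecTail])
        omega
      · push_neg at hd
        by_cases hcc : h 4 ≠ 0
        · -- h4 ≠ 0, h5 = h6 = h7 = 0
          have hub : (J h).rank ≤ 2 := by
            apply aux_rank_le_two_of_factor (J h)
              !![h 2, h 3; 0, h 4; -(h 4), 0; 0, 0; 0, 0]
              !![h 3 / h 4, 1, 0, 0, 0; -(h 2) / h 4, 0, 1, 0, 0]
            funext i j
            fin_cases i <;> fin_cases j <;>
simp only [J, Matrix.mul_apply, Fin.sum_univ_two, Matrix.cons_val_zero,
              Matrix.cons_val_one, Matrix.head_cons, Matrix.empty_val', Matrix.cons_val_fin_one,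
              Matrix.head_fin_const, Matrix.cons_val_two, Matrix.tail_cons, Matrix.cons_val_three,
              Matrix.cons_val_four, Matrix.of_apply, Fin.zero_eta, Fin.mk_one, Fin.reduceFinMk, Matrix.cons_val] <;>
              norm_num [he, hf, hd] <;> field_simp <;> ring
          have hlb : 2 ≤ (J h).rank :=
            aux_two_le_rank (J h) 1 2 (h 4) hcc (by simp [J, Matrix.vecHead, Matrix.vecTail]) (by simp [J, Matrix.vecHead, Matrix.vecTail]) (by simp [J, Matrix.vecHead, Matrix.vecTail])
              (by simp [J, Matrix.vecHead, Matrix.vecTail])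
          omega
        · push_neg at hcc
          by_cases hb : h 3 ≠ 0
          · -- h3 ≠ 0, h4 = h5 = h6 = h7 = 0
            have hub : (J h).rank ≤ 2 := by
              apply aux_rank_le_two_of_factor (J h)
                !![0, 1; -(h 2), 0; -(h 3), 0; 0, 0; 0, 0]
                !![1, 0, 0, 0, 0; 0, h 2, h 3, 0, 0]
              funext i j
              fin_cases i <;> fin_cases j <;>
simp only [J, Matrix.mul_apply, Fin.sum_univ_two, Matrix.cons_val_zero,
                Matrix.cons_val_one, Matrix.head_cons, Matrix.empty_val', Matrix.cons_val_fin_one,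
                Matrix.head_fin_const, Matrix.cons_val_two, Matrix.tail_cons, Matrix.cons_val_three,
                Matrix.cons_val_four, Matrix.of_apply, Fin.zero_eta, Fin.mk_one, Fin.reduceFinMk, Matrix.cons_val] <;>
                norm_num [he, hf, hd, hcc]
            have hlb : 2 ≤ (J h).rank :=
              aux_two_le_rank (J h) 0 2 (h 3) hb (by simp [J, Matrix.vecHead, Matrix.vecTail]) (by simp [J, Matrix.vecHead, Matrix.vecTail]) (by simp [J, Matrix.vecHead, Matrix.vecTail])
                (by simp [J, Matrix.vecHead, Matrix.vecTail])
            omega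
          · push_neg at hb
            have ha : h 2 ≠ 0 := by
              rcases hne with t | t | t | t | t | t
              · exact t
              · exact absurd hb t
              · exact absurd hcc t
              · exact absurd hd t
              · exact absurd he t
              · exact absurd hf t
            have hub : (J h).rank ≤ 2 := by
              apply aux_rank_le_two_of_factor (J h)
                !![1, 0; 0, 1; 0, 0; 0, 0; 0, 0]
                !![0, h 2, 0, 0, 0; -(h 2), 0, 0, 0, 0]
              funext i j
              fin_cases i <;> fin_cases j <;>
simp only [J, Matrix.mul_apply, Fin.sum_univ_two, Matrix.cons_val_zero,
                Matrix.cons_val_one, Matrix.head_cons, Matrix.empty_val', Matrix.cons_val_fin_one,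
                Matrix.head_fin_const, Matrix.cons_val_two, Matrix.tail_cons, Matrix.cons_val_three,
                Matrix.cons_val_four, Matrix.of_apply, Fin.zero_eta, Fin.mk_one, Fin.reduceFinMk, Matrix.cons_val] <;>
                norm_num [he, hf, hd, hcc, hb]
            have hlb : 2 ≤ (J h).rank :=
              aux_two_le_rank (J h) 0 1 (h 2) ha (by simp [J, Matrix.vecHead, Matrix.vecTail]) (by simp [J, Matrix.vecHead, Matrix.vecTail]) (by simp [J, Matrix.vecHead, Matrix.vecTail])
                (by simp [J, Matrix.vecHead, Matrix.vecTail])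
            omega
  · -- case 3: rank 0
    intro e2 e3 e4 e5 e6 e7
    have : J h = 0 := by
      funext i j
      fin_cases i <;> fin_cases j <;> simp [J, e2, e3, e4, e5, e6, e7, Matrix.vecHead, Matrix.vecTail]
    rw [this]
    exact Matrix.rank_zero

end
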